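/- Let S be a finite nonempty set and u : S → ℝ. Define g(α) = α·log((1/|S|)·Σ_s exp(u(s)/α)) for α > 0. Then g is antitone: for all 0 < α₁ ≤ α₂ one has g(α₂) ≤ g(α₁). Consequently, for any ε ∈ ℝ, the sets {u : g(α) ≤ ε} are non-decreasing in α. -/

import Mathlib

open Real Finset

lemma aux_main {S : Type*} [Fintype S] [Nonempty S]
    (u : S → ℝ) (α₁ α₂ : ℝ) (h1 : 0 < α₁) (h12 : α₁ ≤ α₂) :
    α₂ * Real.log ((1 / (Fintype.card S : ℝ)) * ∑ s, Real.exp (u s / α₂))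
      ≤ α₁ * Real.log ((1 / (Fintype.card S : ℝ)) * ∑ s, Real.exp (u s / α₁)) := by
  have h2 : 0 < α₂ := lt_of_lt_of_le h1 h12
  have hcard : (0:ℝ) < (Fintype.card S : ℝ) := by
    exact_mod_cast Fintype.card_pos
  set n : ℝ := (Fintype.card S : ℝ) with hn
  set w : S → ℝ := fun _ => 1 / n with hwdef
  set x : S → ℝ := fun s => Real.exp (u s / α₁) with hxdef
  have hw : ∀ s ∈ Finset.univ, 0 ≤ w s := fun s _ => by positivity
  have hw' : ∑ s : S, w s = 1 := by
    simp only [hwdef, Finset.sum_const, nsmul_eq_mul, Finset.card_univ]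
    field_simp
    exact hn.symm
  set t : ℝ := α₁ / α₂ with htdef
  have ht0 : 0 < t := div_pos h1 h2
  have ht1 : t ≤ 1 := (div_le_one h2).mpr h12
  have hp : (1:ℝ) ≤ 1 / t := one_le_one_div ht0 ht1
  have hz : ∀ s ∈ Finset.univ, (0:ℝ) ≤ x s ^ t := fun s _ =>
    Real.rpow_nonneg (le_of_lt (Real.exp_pos _)) t
  have key := Real.arith_mean_le_rpow_mean Finset.univ w (fun s => x s ^ t) hw hw' hz hp
  have hxt : ∀ s : S, x s ^ t = Real.exp (u s / α₂) := by
    intro s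
    rw [hxdef]
    rw [← Real.exp_mul]
    congr 1
    field_simp [htdef]
    rw [htdef, mul_assoc, div_mul_cancel₀ α₁ (ne_of_gt h2)]
  have hx : ∀ s : S, (x s ^ t) ^ ((1:ℝ)/t) = x s := fun s => by
    rw [← Real.rpow_mul (le_of_lt (Real.exp_pos _)), mul_one_div, div_self (ne_of_gt ht0),
      Real.rpow_one]
  simp only [hx, one_div_one_div] at key
  -- key : ∑ w * x^t ≤ (∑ w * x) ^ t
  have hsum1 : (0:ℝ) < ∑ s : S, w s * x s := by
    apply Finset.sum_pos
    · intro s _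
      have : 0 < x s := Real.exp_pos _
      positivity
    · exact Finset.univ_nonempty
  have hsum2 : (0:ℝ) < ∑ s : S, w s * x s ^ t := by
    apply Finset.sum_pos
    · intro s _
      have : 0 < x s ^ t := Real.rpow_pos_of_pos (Real.exp_pos _) t
      positivity
    · exact Finset.univ_nonempty
  have hlog : Real.log (∑ s : S, w s * x s ^ t) ≤ t * Real.log (∑ s : S, w s * x s) := by
    calc Real.log (∑ s : S, w s * x s ^ t)
        ≤ Real.log ((∑ s : S, w s * x s) ^ t) := Real.log_le_log hsum2 key
      _ = t * Real.log (∑ s : S, w s * x s) := Real.log_rpow hsum1 t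
  have hrw2 : ((1 / n) * ∑ s, Real.exp (u s / α₂)) = ∑ s : S, w s * x s ^ t := by
    rw [Finset.mul_sum]
    exact Finset.sum_congr rfl fun s _ => by rw [hxt s]
  have hrw1 : ((1 / n) * ∑ s, Real.exp (u s / α₁)) = ∑ s : S, w s * x s := by
    rw [Finset.mul_sum]
  rw [hrw1, hrw2]
  calc α₂ * Real.log (∑ s : S, w s * x s ^ t)
      ≤ α₂ * (t * Real.log (∑ s : S, w s * x s)) := by
        exact mul_le_mul_of_nonneg_left hlog (le_of_lt h2)
    _ = α₁ * Real.log (∑ s : S, w s * x s) := by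
        rw [htdef]; field_simp

theorem stmt_5 {S : Type*} [Fintype S] [Nonempty S] :
    (∀ (u : S → ℝ) (α₁ α₂ : ℝ), 0 < α₁ → α₁ ≤ α₂ →
      α₂ * Real.log ((1 / (Fintype.card S : ℝ)) * ∑ s, Real.exp (u s / α₂))
        ≤ α₁ * Real.log ((1 / (Fintype.card S : ℝ)) * ∑ s, Real.exp (u s / α₁))) ∧
    (∀ (ε : ℝ) (α₁ α₂ : ℝ), 0 < α₁ → α₁ ≤ α₂ →
      { u : S → ℝ |
          α₁ * Real.log ((1 / (Fintype.card S : ℝ)) * ∑ s, Real.exp (u s / α₁)) ≤ ε }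
        ⊆ { u : S → ℝ |
          α₂ * Real.log ((1 / (Fintype.card S : ℝ)) * ∑ s, Real.exp (u s / α₂)) ≤ ε }) := by
  constructor
  · exact fun u α₁ α₂ h1 h12 => aux_main u α₁ α₂ h1 h12
  · intro ε α₁ α₂ h1 h12 u hu
    exact le_trans (aux_main u α₁ α₂ h1 h12) hu
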